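/- Let n ≥ 1 and let f : I^n → ℝ be differentiable at every point of I^n. Then for every a ∈ I^n the image of the section transform of f at a, namely the set {f(x) + Df(x)(a − x) : x ∈ I^n} ⊆ ℝ, is connected (an interval). -/

import Mathlib

open Real

open Set in
private lemma keyG (h h' : ℝ → ℝ) (z : ℝ)
    (hd : ∀ t ∈ Icc (0:ℝ) 1, HasDerivAt h (h' t) t) :
    ∀ t ∈ Icc (0:ℝ) 1, t ≠ 0 →
      HasDerivAt (fun t => (h t - z) / t) ((z - (h t - t * h' t)) / t ^ 2) t := by
  intro t ht h0
  have h1 : HasDerivAt (fun t : ℝ => (h t - z) / t)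
      ((h' t * t - (h t - z) * 1) / t ^ 2) t :=
    ((hd t ht).sub_const z).div (hasDerivAt_id t) h0
  have h2 : (z - (h t - t * h' t)) / t ^ 2 = (h' t * t - (h t - z) * 1) / t ^ 2 := by ring
  rw [h2]; exact h1

open Set in
private lemma key0 (h h' : ℝ → ℝ) (z s u : ℝ)
    (hd : ∀ t ∈ Icc (0:ℝ) 1, HasDerivAt h (h' t) t)
    (hs : s ∈ Icc (0:ℝ) 1) (hu : u ∈ Icc (0:ℝ) 1) (hs0 : 0 < s) (hu0 : 0 < u)
    (h1 : h s - s * h' s < z) (h2 : z < h u - u * h' u) :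
    ∃ t ∈ Icc (0:ℝ) 1, h t - t * h' t = z := by
  set G' : ℝ → ℝ := fun t => (z - (h t - t * h' t)) / t ^ 2 with hG'
  have hGs : 0 < G' s := div_pos (by linarith) (by positivity)
  have hGu : G' u < 0 := div_neg_of_neg_of_pos (by linarith) (by positivity)
  have final : ∀ c, 0 < c → c ∈ Icc (0:ℝ) 1 → G' c = 0 → h c - c * h' c = z := by
    intro c hc0 hc hc'
    have : z - (h c - c * h' c) = 0 := by
      rcases div_eq_zero_iff.mp hc' with h | h
      · exact h
      · exact absurd h (by positivity)
    linarith
  rcases le_total s u with hle | hle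
  · have hsub : Icc s u ⊆ Icc (0:ℝ) 1 := Icc_subset_Icc hs.1 hu.2
    have hder : ∀ x ∈ Icc s u, HasDerivWithinAt (fun t => (h t - z) / t) (G' x) (Icc s u) x :=
      fun x hx => (keyG h h' z hd x (hsub hx) (by have := hx.1; intro hc; simp [hc] at this; linarith)).hasDerivWithinAt
    obtain ⟨c, hc, hc0⟩ := exists_hasDerivWithinAt_eq_of_lt_of_gt hle hder hGs hGu
    exact ⟨c, hsub (Ioo_subset_Icc_self hc), final c (lt_trans hs0 hc.1) (hsub (Ioo_subset_Icc_self hc)) hc0⟩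
  · have hsub : Icc u s ⊆ Icc (0:ℝ) 1 := Icc_subset_Icc hu.1 hs.2
    have hder : ∀ x ∈ Icc u s, HasDerivWithinAt (fun t => (h t - z) / t) (G' x) (Icc u s) x :=
      fun x hx => (keyG h h' z hd x (hsub hx) (by have := hx.1; intro hc; simp [hc] at this; linarith)).hasDerivWithinAt
    obtain ⟨c, hc, hc0⟩ := exists_hasDerivWithinAt_eq_of_gt_of_lt hle hder hGu hGs
    exact ⟨c, hsub (Ioo_subset_Icc_self hc), final c (lt_trans hu0 hc.1) (hsub (Ioo_subset_Icc_self hc)) hc0⟩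

open Set in
private lemma keyA (h h' : ℝ → ℝ) (z u : ℝ)
    (hd : ∀ t ∈ Icc (0:ℝ) 1, HasDerivAt h (h' t) t)
    (hu : u ∈ Icc (0:ℝ) 1)
    (h1 : h 0 < z) (h2 : z < h u - u * h' u) :
    ∃ t ∈ Icc (0:ℝ) 1, h t - t * h' t = z := by
  have hu0 : 0 < u := by
    rcases hu.1.lt_or_eq with h | h
    · exact h
    · exfalso; rw [← h] at h2; simp at h2; linarith
  set G : ℝ → ℝ := fun t => (h t - z) / t with hG
  set G' : ℝ → ℝ := fun t => (z - (h t - t * h' t)) / t ^ 2 with hG'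
  set δ : ℝ := (z - h 0) / 2 with hδdef
  have hδ : 0 < δ := by simp only [hδdef]; linarith
  have hcont : ContinuousAt h 0 := (hd 0 ⟨le_refl 0, zero_le_one⟩).continuousAt
  obtain ⟨ε, hε, hε'⟩ := Metric.continuousAt_iff.mp hcont δ hδ
  set s' : ℝ := min (min (ε / 2) (u / 2)) (δ / (|G u| + 1)) with hs'def
  have hs'0 : 0 < s' := lt_min (lt_min (by linarith) (by linarith)) (div_pos hδ (by positivity))
  have hs'u : s' < u :=
    lt_of_le_of_lt (le_trans (min_le_left _ _) (min_le_right _ _)) (by linarith)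
  have hs'ε : s' < ε :=
    lt_of_le_of_lt (le_trans (min_le_left _ _) (min_le_left _ _)) (by linarith)
  have hhs' : h s' - z < -δ := by
    have hdist : dist s' 0 < ε := by
      rw [Real.dist_eq, sub_zero, abs_of_pos hs'0]; exact hs'ε
    have := hε' hdist
    rw [Real.dist_eq] at this
    have h3 := (abs_lt.mp this).2
    simp only [hδdef] at *
    linarith
  have hGs'u : G s' < G u := by
    have e1 : G s' < -δ / s' := by
      simp only [hG]
      rw [div_lt_div_iff_of_pos_right hs'0]
      linarith
    have e2 : (|G u| + 1) * s' ≤ δ := by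
      have : s' ≤ δ / (|G u| + 1) := min_le_right _ _
      rw [le_div_iff₀ (by positivity)] at this
      linarith
    have e3 : |G u| + 1 ≤ δ / s' := (le_div_iff₀ hs'0).mpr (by linarith)
    have e4 : -δ / s' = -(δ / s') := neg_div _ _
    have e5 := neg_abs_le (G u)
    linarith
  have hder : ∀ x ∈ Icc s' u, HasDerivAt G (G' x) x := by
    intro x hx
    exact keyG h h' z hd x ⟨le_trans hs'0.le hx.1, le_trans hx.2 hu.2⟩
      (by intro hc; rw [hc] at hx; linarith [hx.1])
  obtain ⟨c, hc, hceq⟩ := exists_hasDerivAt_eq_slope G G' hs'u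
    (fun x hx => (hder x hx).continuousAt.continuousWithinAt)
    (fun x hx => hder x (Ioo_subset_Icc_self hx))
  have hGc : 0 < G' c := by
    rw [hceq]; exact div_pos (by linarith) (by linarith [hc.1, hc.2])
  have hGu : G' u < 0 := div_neg_of_neg_of_pos (by linarith) (by positivity)
  have hsub : Icc c u ⊆ Icc (0:ℝ) 1 :=
    Icc_subset_Icc (le_trans hs'0.le (le_trans hc.1.le (le_refl c))) hu.2
  have hderW : ∀ x ∈ Icc c u, HasDerivWithinAt G (G' x) (Icc c u) x := by
    intro x hx
    exact (keyG h h' z hd x (hsub hx)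
      (by intro h0; rw [h0] at hx; linarith [hx.1, hc.1, hs'0])).hasDerivWithinAt
  obtain ⟨t, ht, ht0⟩ := exists_hasDerivWithinAt_eq_of_lt_of_gt hc.2.le hderW hGc hGu
  refine ⟨t, hsub (Ioo_subset_Icc_self ht), ?_⟩
  have : z - (h t - t * h' t) = 0 := by
    rcases div_eq_zero_iff.mp ht0 with h | h
    · exact h
    · exfalso
      have : (0:ℝ) < t := by linarith [ht.1, hc.1, hs'0]
      exact absurd h (by positivity)
  linarith

open Set in
private lemma key1 (h h' : ℝ → ℝ) (z s u : ℝ)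
    (hd : ∀ t ∈ Icc (0:ℝ) 1, HasDerivAt h (h' t) t)
    (hs : s ∈ Icc (0:ℝ) 1) (hu : u ∈ Icc (0:ℝ) 1)
    (h1 : h s - s * h' s < z) (h2 : z < h u - u * h' u) :
    ∃ t ∈ Icc (0:ℝ) 1, h t - t * h' t = z := by
  rcases hs.1.lt_or_eq with hs0 | hs0
  · rcases hu.1.lt_or_eq with hu0 | hu0
    · exact key0 h h' z s u hd hs hu hs0 hu0 h1 h2
    · -- u = 0
      have hnd : ∀ t ∈ Icc (0:ℝ) 1, HasDerivAt (fun t => -h t) (-h' t) t :=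
        fun t ht => (hd t ht).neg
      rw [← hu0] at h2
      simp only [zero_mul, sub_zero] at h2
      obtain ⟨t, ht, hteq⟩ := keyA (fun t => -h t) (fun t => -h' t) (-z) s hnd hs
        (by simpa using h2) (by simp; linarith)
      refine ⟨t, ht, ?_⟩
      simp only [mul_neg] at hteq
      linarith
  · -- s = 0
    rw [← hs0] at h1
    simp only [zero_mul, sub_zero] at h1
    exact keyA h h' z u hd hu h1 h2

open Set in
private lemma keyOrd (h h' : ℝ → ℝ)
    (hd : ∀ t ∈ Icc (0:ℝ) 1, HasDerivAt h (h' t) t) :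
    IsPreconnected ((fun t => h t - t * h' t) '' Icc (0:ℝ) 1) := by
  apply Set.OrdConnected.isPreconnected
  constructor
  rintro y1 ⟨s, hs, rfl⟩ y2 ⟨u, hu, rfl⟩ z ⟨hz1, hz2⟩
  rcases hz1.eq_or_lt with rfl | hz1
  · exact ⟨s, hs, rfl⟩
  rcases hz2.eq_or_lt with rfl | hz2
  · exact ⟨u, hu, rfl⟩
  obtain ⟨t, ht, hteq⟩ := key1 h h' z s u hd hs hu hz1 hz2
  exact ⟨t, ht, hteq⟩

/-- The open cube (−π, π)^n in ℝ^n. -/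
def Icube (n : ℕ) : Set (EuclideanSpace ℝ (Fin n)) :=
  {x | ∀ i, x i ∈ Set.Ioo (-π) π}

/-- for f : I^n → ℝ differentiable everywhere on I^n, the image of the
section transform φ_f^a(x) = f(x) + Df(x)(a − x) is a connected subset of ℝ. -/
theorem stmt_9 (n : ℕ) (hn : 1 ≤ n) (f : EuclideanSpace ℝ (Fin n) → ℝ)
    (Df : EuclideanSpace ℝ (Fin n) → (EuclideanSpace ℝ (Fin n) →L[ℝ] ℝ))
    (hf : ∀ x ∈ Icube n, HasFDerivAt f (Df x) x)
    (a : EuclideanSpace ℝ (Fin n)) (ha : a ∈ Icube n) :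
    IsConnected {y : ℝ | ∃ x ∈ Icube n, y = f x + Df x (a - x)} := by
  classical
  have hseg : ∀ x ∈ Icube n, ∀ t ∈ Set.Icc (0:ℝ) 1, a + t • (x - a) ∈ Icube n := by
    intro x hx t ht i
    have hai := ha i
    have hxi := hx i
    have happ : (a + t • (x - a)) i = a i + t * (x i - a i) := rfl
    rw [happ]
    have hc := (convex_Ioo (-π) π) hai hxi (sub_nonneg.mpr ht.2) ht.1 (by ring)
    simp only [smul_eq_mul] at hc
    have he : a i + t * (x i - a i) = (1 - t) * a i + t * x i := by ring
    rw [he]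
    exact hc
  have hSpre : ∀ x ∈ Icube n, IsPreconnected
      ((fun t : ℝ => f (a + t • (x - a)) - t * (Df (a + t • (x - a)) (x - a)))
        '' Set.Icc 0 1) := by
    intro x hx
    apply keyOrd
    intro t ht
    have hL : HasDerivAt (fun t : ℝ => a + t • (x - a)) (x - a) t := by
      have := ((hasDerivAt_id t).smul_const (x - a)).const_add a
      simpa using this
    have := (hf _ (hseg x hx t ht)).comp_hasDerivAt t hL
    simpa [Function.comp_def] using this
  have hval : ∀ (x : EuclideanSpace ℝ (Fin n)) (t : ℝ),
      f (a + t • (x - a)) + Df (a + t • (x - a)) (a - (a + t • (x - a)))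
        = f (a + t • (x - a)) - t * (Df (a + t • (x - a)) (x - a)) := by
    intro x t
    have h1 : a - (a + t • (x - a)) = -(t • (x - a)) := by abel
    rw [h1, map_neg, map_smul, smul_eq_mul]
    ring
  have hM : {y : ℝ | ∃ x ∈ Icube n, y = f x + Df x (a - x)}
      = ⋃ x : {x : EuclideanSpace ℝ (Fin n) // x ∈ Icube n},
          (fun t : ℝ => f (a + t • (x.val - a)) - t * (Df (a + t • (x.val - a)) (x.val - a)))
            '' Set.Icc 0 1 := by
    ext y
    simp only [Set.mem_setOf_eq, Set.mem_iUnion, Set.mem_image]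
    constructor
    · rintro ⟨x, hx, rfl⟩
      refine ⟨⟨x, hx⟩, 1, Set.right_mem_Icc.mpr zero_le_one, ?_⟩
      have h1 : a + (1:ℝ) • (x - a) = x := by simp
      have h2 := hval x 1
      rw [h1] at h2
      show f (a + (1:ℝ) • (x - a)) - 1 * (Df (a + (1:ℝ) • (x - a)) (x - a)) = f x + Df x (a - x)
      rw [h1]
      exact h2.symm
    · rintro ⟨⟨x, hx⟩, t, ht, rfl⟩
      exact ⟨a + t • (x - a), hseg x hx t ht, (hval x t).symm⟩
  constructor
  · exact ⟨f a + Df a (a - a), a, ha, rfl⟩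
  · rw [hM]
    apply isPreconnected_iUnion
    · refine ⟨f a, ?_⟩
      rw [Set.mem_iInter]
      rintro ⟨x, hx⟩
      refine ⟨0, Set.left_mem_Icc.mpr zero_le_one, ?_⟩
      simp
    · rintro ⟨x, hx⟩
      exact hSpre x hx
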